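/- Let n ≥ 3, let D_n = ⟨a,b | a^n = b^2 = 1, bab = a^{-1}⟩, and let S = S₁ ∪ S₂ ⊆ D_n∖{1} with S = S^{-1}, where S₁ ⊆ ⟨a⟩ and S₂ = {ba^i} is a singleton for some 0 ≤ i ≤ n−1. If S₁ is a union of atoms of the Boolean algebra B(⟨a⟩), then the Cayley graph X(D_n,S) is integral. -/

import Mathlib

open DihedralGroup Polynomial

/-- The degree-2 irreducible character `χ_h` of the dihedral group `D_n`:
`χ_h(a^k) = 2cos(2khπ/n)` and `χ_h(ba^k) = 0`. -/
noncomputable def chi (n h : ℕ) : DihedralGroup n → ℝ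
  | .r k => 2 * Real.cos (2 * k.val * h * Real.pi / n)
  | .sr _ => 0

/-- `χ(A) = Σ_{x ∈ A} χ(x)`. -/
noncomputable def chiSum (n h : ℕ) (A : Set (DihedralGroup n)) : ℝ :=
  ∑ᶠ x ∈ A, chi n h x

/-- `χ(A²) = Σ_{x,y ∈ A} χ(xy)`, over ordered pairs. -/
noncomputable def chiSum2 (n h : ℕ) (A : Set (DihedralGroup n)) : ℝ :=
  ∑ᶠ x ∈ A, ∑ᶠ y ∈ A, chi n h (x * y)

/-- The Cayley graph `X(G,S)`: vertices `G`, with `x,y` adjacent iff `x⁻¹y ∈ S`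
(for `S` inverse-closed and not containing `1`). -/
def cayleyGraph {G : Type*} [Group G] (S : Set G) : SimpleGraph G :=
  SimpleGraph.fromRel (fun x y => x⁻¹ * y ∈ S)

open scoped Classical in
/-- The adjacency matrix of a graph, over `ℂ`. -/
noncomputable def adjMat {V : Type*} [Fintype V] (G : SimpleGraph V) : Matrix V V ℂ :=
  Matrix.of fun x y => if G.Adj x y then 1 else 0

/-- A graph is integral if every eigenvalue of its adjacency matrix is an integer. -/
def IsIntegralGraph {V : Type*} [Fintype V] [DecidableEq V] (G : SimpleGraph V) : Prop :=
  ∀ μ ∈ spectrum ℂ (adjMat G), ∃ z : ℤ, μ = (z : ℂ)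

/-- The cyclic subgroup `⟨a⟩` of `D_n`, as a set. -/
def rSet (n : ℕ) : Set (DihedralGroup n) := {x | ∃ k, x = .r k}

/-- The coset `b⟨a⟩` of `D_n`, as a set. -/
def srSet (n : ℕ) : Set (DihedralGroup n) := {x | ∃ k, x = .sr k}

/-- `S` belongs to the Boolean algebra `B(⟨a⟩)`, i.e. `S ⊆ ⟨a⟩` is a union of atoms
`[a^l] = {a^k : gcd(k,n) = gcd(l,n)}`: membership in `S` is constant on each atom. -/
def InBooleanAlgebra (n : ℕ) (S : Set (DihedralGroup n)) : Prop :=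
  S ⊆ rSet n ∧ ∀ k l : ZMod n, Nat.gcd k.val n = Nat.gcd l.val n →
    (DihedralGroup.r k ∈ S ↔ DihedralGroup.r l ∈ S)

/-- The multiplicity of `x` in the multiset `S² = {s₁s₂ : (s₁,s₂) ∈ S × S}` (ordered pairs). -/
noncomputable def sqMult {n : ℕ} (S : Set (DihedralGroup n)) (x : DihedralGroup n) : ℕ :=
  Nat.card {p : DihedralGroup n × DihedralGroup n // p.1 ∈ S ∧ p.2 ∈ S ∧ p.1 * p.2 = x}

/-- The irreducible character `φ_h` of the cyclic group `⟨a⟩` of order `n`: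
`φ_h(a^k) = e^{2πihk/n}`. -/
noncomputable def phi (n h : ℕ) (k : ZMod n) : ℂ :=
  Complex.exp (2 * Real.pi * Complex.I * h * k.val / n)


noncomputable def ww (n : ℕ) : ℂ := Complex.exp (2 * Real.pi * Complex.I / n)

lemma ww_prim (n : ℕ) [NeZero n] : IsPrimitiveRoot (ww n) n :=
  Complex.isPrimitiveRoot_exp n (NeZero.ne n)

lemma ww_pow_n (n : ℕ) [NeZero n] : ww n ^ n = 1 := (ww_prim n).pow_eq_one

lemma ww_pow_mod (n : ℕ) [NeZero n] (x : ℕ) : ww n ^ (x % n) = ww n ^ x := by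
  conv_rhs => rw [← Nat.div_add_mod x n]
  rw [pow_add, pow_mul, ww_pow_n, one_pow, one_mul]

noncomputable def Zf (n : ℕ) (m : ZMod n) : ℂ := ww n ^ m.val

lemma Zf_add (n : ℕ) [NeZero n] (a b : ZMod n) : Zf n (a + b) = Zf n a * Zf n b := by
  rw [Zf, Zf, Zf, ZMod.val_add, ww_pow_mod, pow_add]

lemma Zf_mul (n : ℕ) [NeZero n] (a b : ZMod n) : Zf n (a * b) = ww n ^ (a.val * b.val) := by
  rw [Zf, ZMod.val_mul, ww_pow_mod]

lemma Zf_zero (n : ℕ) [NeZero n] : Zf n 0 = 1 := by simp [Zf]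

lemma zmod_sum (n : ℕ) [NeZero n] (g : ZMod n → ℂ) :
    ∑ j : ZMod n, g j = ∑ t ∈ Finset.range n, g (t : ZMod n) := by
  refine Finset.sum_nbij' (fun j => j.val) (fun t => (t : ZMod n)) ?_ ?_ ?_ ?_ ?_
  · intro j _; exact Finset.mem_range.mpr j.val_lt
  · intro t _; exact Finset.mem_univ _
  · intro j _; exact ZMod.natCast_rightInverse j
  · intro t ht; exact ZMod.val_natCast_of_lt (Finset.mem_range.mp ht)
  · intro j _; rw [ZMod.natCast_rightInverse j]

lemma sum_Z_orth (n : ℕ) [NeZero n] (c : ZMod n) :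
    ∑ h : ZMod n, Zf n (h * c) = if c = 0 then (n : ℂ) else 0 := by
  have key : ∑ h : ZMod n, Zf n (h * c) = ∑ t ∈ Finset.range n, (ww n ^ c.val) ^ t := by
    rw [zmod_sum n (fun h => Zf n (h * c))]
    refine Finset.sum_congr rfl fun t ht => ?_
    rw [Zf_mul, ZMod.val_natCast_of_lt (Finset.mem_range.mp ht), mul_comm, pow_mul]
  rw [key]
  by_cases hc : c = 0
  · simp [hc]
  · rw [if_neg hc]
    have h1 : ww n ^ c.val ≠ 1 :=
      (ww_prim n).pow_ne_one_of_pos_of_lt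
        (Nat.pos_of_ne_zero (fun h => hc ((ZMod.val_eq_zero c).mp h))).ne' c.val_lt
    rw [geom_sum_eq h1]
    have h2 : (ww n ^ c.val) ^ n = 1 := by
      rw [← pow_mul, mul_comm, pow_mul, ww_pow_n, one_pow]
    rw [h2]; simp

lemma Td_int (n : ℕ) [NeZero n] (h : ZMod n) (d : ℕ) (hd : d ∈ n.divisors) :
    ∃ z : ℤ, ∑ j ∈ Finset.univ.filter (fun j : ZMod n => d ∣ j.val), Zf n (h * j) = z := by
  obtain ⟨hdn, hn0⟩ := Nat.mem_divisors.mp hd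
  have hdpos : 0 < d := Nat.pos_of_ne_zero (fun h0 => hn0 (by simpa [h0] using hdn))
  have step1 : ∑ j ∈ Finset.univ.filter (fun j : ZMod n => d ∣ j.val), Zf n (h * j)
      = ∑ t ∈ Finset.range (n / d), ww n ^ (h.val * (d * t)) := by
    refine Finset.sum_nbij' (fun j => j.val / d) (fun t => ((d * t : ℕ) : ZMod n))
      ?_ ?_ ?_ ?_ ?_
    · intro j hj
      exact Finset.mem_range.mpr (Nat.div_lt_div_of_lt_of_dvd hdn j.val_lt)
    · intro t _
      refine Finset.mem_filter.mpr ⟨Finset.mem_univ _, ?_⟩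
      rw [ZMod.val_natCast]
      exact (Nat.dvd_mod_iff hdn).mpr ⟨t, rfl⟩
    · intro j hj
      show ((d * (j.val / d) : ℕ) : ZMod n) = j
      rw [Nat.mul_div_cancel' (Finset.mem_filter.mp hj).2]
      exact ZMod.natCast_rightInverse j
    · intro t ht
      have hlt : d * t < n := by
        have h4 := Nat.mul_le_mul_left d (Nat.succ_le_of_lt (Finset.mem_range.mp ht))
        rw [Nat.mul_div_cancel' hdn, Nat.mul_succ] at h4
        omega
      show (((d * t : ℕ) : ZMod n)).val / d = t
      rw [ZMod.val_natCast_of_lt hlt, Nat.mul_div_cancel_left t hdpos]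
    · intro j hj
      rw [Zf_mul, Nat.mul_div_cancel' (Finset.mem_filter.mp hj).2]
  rw [step1]
  have step2 : ∑ t ∈ Finset.range (n / d), ww n ^ (h.val * (d * t))
      = ∑ t ∈ Finset.range (n / d), (ww n ^ (h.val * d)) ^ t := by
    refine Finset.sum_congr rfl fun t _ => ?_
    rw [← pow_mul, mul_assoc]
  rw [step2]
  by_cases he : ww n ^ (h.val * d) = 1
  · refine ⟨((n / d : ℕ) : ℤ), ?_⟩
    simp [he]
    norm_cast
  · have hpow : (ww n ^ (h.val * d)) ^ (n / d) = 1 := by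
      rw [← pow_mul, mul_assoc, Nat.mul_div_cancel' hdn, mul_comm h.val n, pow_mul,
        ww_pow_n, one_pow]
    refine ⟨0, ?_⟩
    rw [geom_sum_eq he, hpow]
    simp

lemma gcd_cast (n : ℕ) [NeZero n] {d : ℕ} (hdn : d ∣ n) :
    Nat.gcd ((d : ZMod n)).val n = d := by
  rw [ZMod.val_natCast, ← Nat.gcd_rec, Nat.gcd_comm, Nat.gcd_eq_left hdn]

lemma nd_lt {n d e : ℕ} (hn0 : n ≠ 0) (hdpos : 0 < d) (hde : d ∣ e) (hen : e ∣ n)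
    (hne : e ≠ d) : n / e < n / d := by
  obtain ⟨k, hk⟩ := hde
  obtain ⟨q, hq⟩ := hen
  have he0 : 0 < e := Nat.pos_of_ne_zero (fun h0 => hn0 (by simp [h0] at hq; omega))
  have hk2 : 2 ≤ k := by
    rcases Nat.lt_or_ge k 2 with h2 | h2
    · interval_cases k
      · simp at hk; omega
      · simp at hk; exact absurd hk.symm hne.symm
    · exact h2
  have hq1 : 1 ≤ q := by
    rcases Nat.eq_zero_or_pos q with h0 | h0
    · exfalso; exact hn0 (by simp [hq, h0])
    · exact h0
  have h1 : n / e = q := by rw [hq, Nat.mul_div_cancel_left _ he0]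
  have h2 : n / d = k * q := by rw [hq, hk, mul_assoc, Nat.mul_div_cancel_left _ hdpos]
  have h3 : 2 * q ≤ k * q := Nat.mul_le_mul_right q hk2
  omega

lemma cd_int (n : ℕ) [NeZero n] (h : ZMod n) :
    ∀ m : ℕ, ∀ d ∈ n.divisors, n / d ≤ m →
      ∃ z : ℤ, ∑ j ∈ Finset.univ.filter (fun j : ZMod n => Nat.gcd j.val n = d),
        Zf n (h * j) = z := by
  intro m
  induction m with
  | zero =>
    intro d hd hle
    obtain ⟨hdn, hn0⟩ := Nat.mem_divisors.mp hd
    have : 0 < n / d := Nat.div_pos (Nat.le_of_dvd (Nat.pos_of_ne_zero hn0) hdn)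
      (Nat.pos_of_ne_zero (fun h0 => hn0 (by simpa [h0] using hdn)))
    omega
  | succ m ih =>
    intro d hd hle
    obtain ⟨hdn, hn0⟩ := Nat.mem_divisors.mp hd
    have hdpos : 0 < d := Nat.pos_of_ne_zero (fun h0 => hn0 (by simpa [h0] using hdn))
    set t := n.divisors.filter (fun e => d ∣ e) with ht
    set s := Finset.univ.filter (fun j : ZMod n => d ∣ j.val) with hs
    have hmap : ∀ j ∈ s, Nat.gcd j.val n ∈ t := by
      intro j hj
      refine Finset.mem_filter.mpr ⟨Nat.mem_divisors.mpr ⟨Nat.gcd_dvd_right _ _, hn0⟩, ?_⟩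
      exact Nat.dvd_gcd (Finset.mem_filter.mp hj).2 hdn
    have hpart := Finset.sum_fiberwise_of_maps_to hmap (fun j => Zf n (h * j))
    have hfib : ∀ e ∈ t, s.filter (fun j => Nat.gcd j.val n = e)
        = Finset.univ.filter (fun j : ZMod n => Nat.gcd j.val n = e) := by
      intro e het
      ext j
      simp only [hs, Finset.mem_filter, Finset.mem_univ, true_and]
      constructor
      · rintro ⟨-, h2⟩; exact h2
      · intro h2
        refine ⟨?_, h2⟩
        have hde : d ∣ e := (Finset.mem_filter.mp het).2
        exact dvd_trans (h2 ▸ hde) (Nat.gcd_dvd_left _ _)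
    have hfib' : ∀ e ∈ t, (∑ j ∈ s.filter (fun j => Nat.gcd j.val n = e), Zf n (h * j))
        = ∑ j ∈ Finset.univ.filter (fun j : ZMod n => Nat.gcd j.val n = e), Zf n (h * j) :=
      fun e he => by rw [hfib e he]
    rw [Finset.sum_congr rfl hfib'] at hpart
    have hdt : d ∈ t := Finset.mem_filter.mpr ⟨hd, dvd_refl d⟩
    rw [← Finset.add_sum_erase t (fun e => ∑ j ∈ Finset.univ.filter
      (fun j : ZMod n => Nat.gcd j.val n = e), Zf n (h * j)) hdt] at hpart
    obtain ⟨zT, hzT⟩ := Td_int n h d hd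
    have herase : ∃ z : ℤ, ∑ e ∈ t.erase d,
        (∑ j ∈ Finset.univ.filter (fun j : ZMod n => Nat.gcd j.val n = e), Zf n (h * j)) = z := by
      have : ∀ e ∈ t.erase d, ∃ z : ℤ,
          ∑ j ∈ Finset.univ.filter (fun j : ZMod n => Nat.gcd j.val n = e), Zf n (h * j) = z := by
        intro e hee
        have hne : e ≠ d := (Finset.mem_erase.mp hee).1
        have het : e ∈ t := (Finset.mem_erase.mp hee).2
        have hed : e ∈ n.divisors := (Finset.mem_filter.mp het).1
        have hde : d ∣ e := (Finset.mem_filter.mp het).2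
        refine ih e hed ?_
        have := nd_lt hn0 hdpos hde (Nat.mem_divisors.mp hed).1 hne
        omega
      classical
      obtain ⟨zf, hzf⟩ := Classical.axiomOfChoice
        (fun e : {e // e ∈ t.erase d} => this e.1 e.2)
      refine ⟨∑ e ∈ (t.erase d).attach, zf e, ?_⟩
      rw [← Finset.sum_attach (t.erase d)]
      push_cast
      exact Finset.sum_congr rfl fun e _ => hzf e
    obtain ⟨zE, hzE⟩ := herase
    refine ⟨zT - zE, ?_⟩
    have := hpart
    push_cast
    linear_combination hzT - hzE + hpart

open scoped Classical in
noncomputable def indf (n : ℕ) (S₁ : Set (DihedralGroup n)) (j : ZMod n) : ℂ :=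
  if DihedralGroup.r j ∈ S₁ then 1 else 0

noncomputable def Lam (n : ℕ) [NeZero n] (S₁ : Set (DihedralGroup n)) (h : ZMod n) : ℂ :=
  ∑ j : ZMod n, indf n S₁ j * Zf n (h * j)

lemma lam_int (n : ℕ) [NeZero n] (S₁ : Set (DihedralGroup n))
    (hB : InBooleanAlgebra n S₁) (h : ZMod n) : ∃ z : ℤ, Lam n S₁ h = z := by
  classical
  have hn0 : n ≠ 0 := NeZero.ne n
  have hmap : ∀ j : ZMod n, j ∈ Finset.univ → Nat.gcd j.val n ∈ n.divisors :=
    fun j _ => Nat.mem_divisors.mpr ⟨Nat.gcd_dvd_right _ _, hn0⟩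
  have hpart := Finset.sum_fiberwise_of_maps_to hmap
    (fun j => indf n S₁ j * Zf n (h * j))
  rw [Lam, ← hpart]
  have hterm : ∀ d ∈ n.divisors,
      (∑ j ∈ Finset.univ.filter (fun j : ZMod n => Nat.gcd j.val n = d),
        indf n S₁ j * Zf n (h * j))
      = indf n S₁ (d : ZMod n) *
        ∑ j ∈ Finset.univ.filter (fun j : ZMod n => Nat.gcd j.val n = d), Zf n (h * j) := by
    intro d hd
    rw [Finset.mul_sum]
    refine Finset.sum_congr rfl fun j hj => ?_
    have hgcd : Nat.gcd j.val n = d := (Finset.mem_filter.mp hj).2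
    have : indf n S₁ j = indf n S₁ (d : ZMod n) := by
      have := hB.2 j (d : ZMod n) (by rw [hgcd, gcd_cast n (Nat.mem_divisors.mp hd).1])
      simp only [indf]
      by_cases hm : DihedralGroup.r j ∈ S₁
      · rw [if_pos hm, if_pos (this.mp hm)]
      · rw [if_neg hm, if_neg (fun hc => hm (this.mpr hc))]
    rw [this]
  rw [Finset.sum_congr rfl hterm]
  have hint : ∀ d ∈ n.divisors, ∃ z : ℤ,
      indf n S₁ (d : ZMod n) *
        (∑ j ∈ Finset.univ.filter (fun j : ZMod n => Nat.gcd j.val n = d), Zf n (h * j)) = z := by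
    intro d hd
    obtain ⟨z, hz⟩ := cd_int n h (n / d) d hd le_rfl
    by_cases hm : DihedralGroup.r (d : ZMod n) ∈ S₁
    · exact ⟨z, by rw [indf, if_pos hm, one_mul, hz]⟩
    · exact ⟨0, by rw [indf, if_neg hm, zero_mul]; simp⟩
  obtain ⟨zf, hzf⟩ := Classical.axiomOfChoice
    (fun d : {d // d ∈ n.divisors} => hint d.1 d.2)
  refine ⟨∑ d ∈ n.divisors.attach, zf d, ?_⟩
  rw [← Finset.sum_attach n.divisors]
  push_cast
  exact Finset.sum_congr rfl fun d _ => hzf d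

noncomputable def Wf (n : ℕ) [NeZero n] (i h : ZMod n) (ε δ : ℂ) : DihedralGroup n → ℂ
  | .r k => Zf n (h * k) + ε * Zf n (h * i - h * k)
  | .sr k => δ * (Zf n (h * k) + ε * Zf n (h * i - h * k))

/-- The sum over `DihedralGroup n` splits into rotations and reflections. -/
lemma dihedral_sum (n : ℕ) [NeZero n] (g : DihedralGroup n → ℂ) :
    ∑ x : DihedralGroup n, g x
      = ∑ k : ZMod n, g (.r k) + ∑ k : ZMod n, g (.sr k) := by
  let e : (ZMod n) ⊕ (ZMod n) ≃ DihedralGroup n :=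
    { toFun := fun x => match x with | .inl k => .r k | .inr k => .sr k
      invFun := fun x => match x with | .r k => .inl k | .sr k => .inr k
      left_inv := by rintro (k | k) <;> rfl
      right_inv := by rintro (k | k) <;> rfl }
  rw [← Equiv.sum_comp e g, Fintype.sum_sum_type]
  rfl

open scoped Classical in
lemma adjMat_cayley (n : ℕ) [NeZero n] (S : Set (DihedralGroup n))
    (h1 : (1 : DihedralGroup n) ∉ S) (hSinv : S⁻¹ = S) (x y : DihedralGroup n) :
    adjMat (cayleyGraph S) x y = if x⁻¹ * y ∈ S then 1 else 0 := by
  have hadj : (cayleyGraph S).Adj x y ↔ x⁻¹ * y ∈ S := by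
    rw [cayleyGraph, SimpleGraph.fromRel_adj]
    constructor
    · rintro ⟨hne, hmem | hmem⟩
      · exact hmem
      · rw [← hSinv]
        rw [Set.mem_inv, mul_inv_rev, inv_inv]
        exact hmem
    · intro hm
      refine ⟨?_, Or.inl hm⟩
      rintro rfl
      rw [inv_mul_cancel] at hm
      exact h1 hm
  by_cases hxy : x⁻¹ * y ∈ S <;> simp [adjMat, hadj, hxy]

section eigen

variable (n : ℕ) [NeZero n] (S S₁ : Set (DihedralGroup n)) (i : ZMod n)

lemma sumA (h : ZMod n) (c : ZMod n) :
    ∑ j : ZMod n, indf n S₁ j * Zf n (c + h * j) = Lam n S₁ h * Zf n c := by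
  rw [Lam, Finset.sum_mul]
  refine Finset.sum_congr rfl fun j _ => ?_
  rw [Zf_add]
  ring

lemma sumB (hsym : ∀ j : ZMod n, DihedralGroup.r (-j) ∈ S₁ ↔ DihedralGroup.r j ∈ S₁)
    (h : ZMod n) (c : ZMod n) :
    ∑ j : ZMod n, indf n S₁ j * Zf n (c - h * j) = Lam n S₁ h * Zf n c := by
  classical
  have := (Equiv.sum_comp (Equiv.neg (ZMod n))
    (fun j => indf n S₁ j * Zf n (c - h * j))).symm
  rw [this]
  have heq : ∀ j : ZMod n,
      indf n S₁ (Equiv.neg (ZMod n) j) * Zf n (c - h * (Equiv.neg (ZMod n) j))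
        = indf n S₁ j * Zf n (c + h * j) := by
    intro j
    have h1 : indf n S₁ (-j) = indf n S₁ j := by
      simp only [indf]
      by_cases hm : DihedralGroup.r j ∈ S₁
      · rw [if_pos hm, if_pos ((hsym j).mpr hm)]
      · rw [if_neg hm, if_neg (fun hc => hm ((hsym j).mp hc))]
    have h2 : c - h * (-j) = c + h * j := by ring
    simp only [Equiv.neg_apply, h1, h2]
  rw [Finset.sum_congr rfl (fun j _ => heq j)]
  exact sumA n S₁ h c

end eigen

lemma eigen (n : ℕ) [NeZero n] (S S₁ : Set (DihedralGroup n)) (i : ZMod n)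
    (h1 : (1 : DihedralGroup n) ∉ S) (hSinv : S⁻¹ = S)
    (hrS : ∀ j : ZMod n, (DihedralGroup.r j ∈ S ↔ DihedralGroup.r j ∈ S₁))
    (hsrS : ∀ m : ZMod n, (DihedralGroup.sr m ∈ S ↔ m = i))
    (hsym : ∀ j : ZMod n, DihedralGroup.r (-j) ∈ S₁ ↔ DihedralGroup.r j ∈ S₁)
    (h : ZMod n) (ε δ : ℂ) (hε : ε * ε = 1) (hδ : δ * δ = 1) :
    (adjMat (cayleyGraph S)).mulVec (Wf n i h ε δ)
      = (Lam n S₁ h + ε * δ) • Wf n i h ε δ := by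
  classical
  funext x
  simp only [Matrix.mulVec, dotProduct, Pi.smul_apply, smul_eq_mul]
  have hent : ∀ y : DihedralGroup n,
      adjMat (cayleyGraph S) x y * Wf n i h ε δ y
        = if x⁻¹ * y ∈ S then Wf n i h ε δ y else 0 := by
    intro y
    rw [adjMat_cayley n S h1 hSinv x y, ite_mul, one_mul, zero_mul]
  rw [Finset.sum_congr rfl (fun y _ => hent y)]
  rw [dihedral_sum n (fun y => if x⁻¹ * y ∈ S then Wf n i h ε δ y else 0)]
  cases x with
  | r k =>
    have hs2 : ∑ l : ZMod n,
        (if (DihedralGroup.r k)⁻¹ * DihedralGroup.sr l ∈ S then Wf n i h ε δ (DihedralGroup.sr l) else 0)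
        = Wf n i h ε δ (DihedralGroup.sr (i - k)) := by
      have hc : ∀ l : ZMod n,
          ((DihedralGroup.r k)⁻¹ * DihedralGroup.sr l ∈ S) = (l = i - k) := by
        intro l
        have e2 : (DihedralGroup.r k)⁻¹ * DihedralGroup.sr l = DihedralGroup.sr (l + k) := by
          show DihedralGroup.r (-k) * DihedralGroup.sr l = _
          rw [r_mul_sr, sub_neg_eq_add]
        rw [e2, eq_iff_iff, hsrS (l + k)]
        constructor
        · intro hh; rw [← hh]; ring
        · intro hh; rw [hh]; ring
      simp only [hc]
      rw [Finset.sum_ite_eq' Finset.univ (i - k) (fun l => Wf n i h ε δ (DihedralGroup.sr l))]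
      simp
    have hs1 : ∑ l : ZMod n,
        (if (DihedralGroup.r k)⁻¹ * DihedralGroup.r l ∈ S then Wf n i h ε δ (DihedralGroup.r l) else 0)
        = Lam n S₁ h * Zf n (h * k) + ε * (Lam n S₁ h * Zf n (h * i - h * k)) := by
      rw [← Equiv.sum_comp (Equiv.addLeft k)
        (fun l => if (DihedralGroup.r k)⁻¹ * DihedralGroup.r l ∈ S then Wf n i h ε δ (DihedralGroup.r l) else 0)]
      have hterm : ∀ j : ZMod n,
          (if (DihedralGroup.r k)⁻¹ * DihedralGroup.r ((Equiv.addLeft k) j) ∈ S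
            then Wf n i h ε δ (DihedralGroup.r ((Equiv.addLeft k) j)) else 0)
          = indf n S₁ j * Zf n (h * k + h * j)
            + ε * (indf n S₁ j * Zf n ((h * i - h * k) - h * j)) := by
        intro j
        have hc : (DihedralGroup.r k)⁻¹ * DihedralGroup.r ((Equiv.addLeft k) j)
            = DihedralGroup.r j := by
          show DihedralGroup.r (-k) * DihedralGroup.r (k + j) = _
          rw [r_mul_r]
          congr 1
          ring
        have hW : Wf n i h ε δ (DihedralGroup.r ((Equiv.addLeft k) j))
            = Zf n (h * k + h * j) + ε * Zf n ((h * i - h * k) - h * j) := by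
          show Zf n (h * (k + j)) + ε * Zf n (h * i - h * (k + j)) = _
          have a1 : h * (k + j) = h * k + h * j := by ring
          have a2 : h * i - h * (k + j) = (h * i - h * k) - h * j := by ring
          rw [a2, a1]
        rw [hc, hW, indf]
        by_cases hm : DihedralGroup.r j ∈ S₁
        · rw [if_pos ((hrS j).mpr hm), if_pos hm]; ring
        · rw [if_neg (fun hx => hm ((hrS j).mp hx)), if_neg hm]; ring
      rw [Finset.sum_congr rfl (fun j _ => hterm j), Finset.sum_add_distrib,
        ← Finset.mul_sum, sumA n S₁ h (h * k), sumB n S₁ hsym h (h * i - h * k)]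
    rw [hs1, hs2]
    have hWsr : Wf n i h ε δ (DihedralGroup.sr (i - k))
        = δ * (Zf n (h * i - h * k) + ε * Zf n (h * k)) := by
      show δ * (Zf n (h * (i - k)) + ε * Zf n (h * i - h * (i - k))) = _
      have a1 : h * (i - k) = h * i - h * k := by ring
      have a2 : h * i - h * (i - k) = h * k := by ring
      rw [a2, a1]
    rw [hWsr]
    show _ = (Lam n S₁ h + ε * δ) * (Zf n (h * k) + ε * Zf n (h * i - h * k))
    linear_combination (-(δ * Zf n (h * i - h * k))) * hε
  | sr k =>
    have hs1 : ∑ l : ZMod n,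
        (if (DihedralGroup.sr k)⁻¹ * DihedralGroup.r l ∈ S then Wf n i h ε δ (DihedralGroup.r l) else 0)
        = Wf n i h ε δ (DihedralGroup.r (i - k)) := by
      have hc : ∀ l : ZMod n,
          ((DihedralGroup.sr k)⁻¹ * DihedralGroup.r l ∈ S) = (l = i - k) := by
        intro l
        have e2 : (DihedralGroup.sr k)⁻¹ * DihedralGroup.r l = DihedralGroup.sr (k + l) := by
          show DihedralGroup.sr k * DihedralGroup.r l = _
          rw [sr_mul_r]
        rw [e2, eq_iff_iff, hsrS (k + l)]
        constructor
        · intro hh; rw [← hh]; ring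
        · intro hh; rw [hh]; ring
      simp only [hc]
      rw [Finset.sum_ite_eq' Finset.univ (i - k) (fun l => Wf n i h ε δ (DihedralGroup.r l))]
      simp
    have hs2 : ∑ l : ZMod n,
        (if (DihedralGroup.sr k)⁻¹ * DihedralGroup.sr l ∈ S then Wf n i h ε δ (DihedralGroup.sr l) else 0)
        = δ * (Lam n S₁ h * Zf n (h * k)) + δ * ε * (Lam n S₁ h * Zf n (h * i - h * k)) := by
      rw [← Equiv.sum_comp (Equiv.addLeft k)
        (fun l => if (DihedralGroup.sr k)⁻¹ * DihedralGroup.sr l ∈ S then Wf n i h ε δ (DihedralGroup.sr l) else 0)]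
      have hterm : ∀ j : ZMod n,
          (if (DihedralGroup.sr k)⁻¹ * DihedralGroup.sr ((Equiv.addLeft k) j) ∈ S
            then Wf n i h ε δ (DihedralGroup.sr ((Equiv.addLeft k) j)) else 0)
          = δ * (indf n S₁ j * Zf n (h * k + h * j))
            + δ * ε * (indf n S₁ j * Zf n ((h * i - h * k) - h * j)) := by
        intro j
        have hc : (DihedralGroup.sr k)⁻¹ * DihedralGroup.sr ((Equiv.addLeft k) j)
            = DihedralGroup.r j := by
          show DihedralGroup.sr k * DihedralGroup.sr (k + j) = _
          rw [sr_mul_sr]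
          congr 1
          ring
        have hW : Wf n i h ε δ (DihedralGroup.sr ((Equiv.addLeft k) j))
            = δ * (Zf n (h * k + h * j) + ε * Zf n ((h * i - h * k) - h * j)) := by
          show δ * (Zf n (h * (k + j)) + ε * Zf n (h * i - h * (k + j))) = _
          have a1 : h * (k + j) = h * k + h * j := by ring
          have a2 : h * i - h * (k + j) = (h * i - h * k) - h * j := by ring
          rw [a2, a1]
        rw [hc, hW, indf]
        by_cases hm : DihedralGroup.r j ∈ S₁
        · rw [if_pos ((hrS j).mpr hm), if_pos hm]; ring
        · rw [if_neg (fun hx => hm ((hrS j).mp hx)), if_neg hm]; ring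
      rw [Finset.sum_congr rfl (fun j _ => hterm j), Finset.sum_add_distrib]
      have r1 : ∑ j : ZMod n, δ * (indf n S₁ j * Zf n (h * k + h * j))
          = δ * (Lam n S₁ h * Zf n (h * k)) := by
        rw [← Finset.mul_sum, sumA n S₁ h (h * k)]
      have r2 : ∑ j : ZMod n, δ * ε * (indf n S₁ j * Zf n ((h * i - h * k) - h * j))
          = δ * ε * (Lam n S₁ h * Zf n (h * i - h * k)) := by
        rw [← Finset.mul_sum, sumB n S₁ hsym h (h * i - h * k)]
      rw [r1, r2]
    rw [hs1, hs2]
    have hWr : Wf n i h ε δ (DihedralGroup.r (i - k))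
        = Zf n (h * i - h * k) + ε * Zf n (h * k) := by
      show Zf n (h * (i - k)) + ε * Zf n (h * i - h * (i - k)) = _
      have a1 : h * (i - k) = h * i - h * k := by ring
      have a2 : h * i - h * (i - k) = h * k := by ring
      rw [a2, a1]
    rw [hWr]
    show _ = (Lam n S₁ h + ε * δ) * (δ * (Zf n (h * k) + ε * Zf n (h * i - h * k)))
    linear_combination (-(Zf n (h * i - h * k) * ε * ε) - ε * Zf n (h * k)) * hδ
      + (-(Zf n (h * i - h * k))) * hε

lemma aeval_mulVec {V : Type*} [Fintype V] [DecidableEq V] (A : Matrix V V ℂ) (v : V → ℂ)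
    (μ : ℂ) (hv : A.mulVec v = μ • v) (q : ℂ[X]) :
    (Polynomial.aeval A q).mulVec v = q.eval μ • v := by
  induction q using Polynomial.induction_on with
  | C a =>
    rw [aeval_C, eval_C, Algebra.algebraMap_eq_smul_one, Matrix.smul_mulVec,
      Matrix.one_mulVec]
  | add p q hp hq =>
    rw [map_add, Matrix.add_mulVec, hp, hq, eval_add, add_smul]
  | monomial m a hm =>
    have hq : (Polynomial.C a * Polynomial.X ^ (m + 1) : ℂ[X])
        = (Polynomial.C a * Polynomial.X ^ m) * Polynomial.X := by ring
    rw [hq, map_mul, aeval_X, ← Matrix.mulVec_mulVec, hv, Matrix.mulVec_smul, hm, smul_smul]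
    congr 1
    simp only [eval_mul, eval_pow, eval_C, eval_X]
    ring

/-- The four-eigenvector combination recovering delta functions on rotations. -/
lemma delta_r (n : ℕ) [NeZero n] (i : ZMod n) (m : ZMod n) :
    (Pi.single (DihedralGroup.r m) (1 : ℂ) : DihedralGroup n → ℂ)
      = ∑ h : ZMod n, ((4 * (n : ℂ))⁻¹ * Zf n (-(h * m))) •
          (Wf n i h 1 1 + Wf n i h 1 (-1) + Wf n i h (-1) 1 + Wf n i h (-1) (-1)) := by
  have hn : (n : ℂ) ≠ 0 := Nat.cast_ne_zero.mpr (NeZero.ne n)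
  funext x
  rw [Finset.sum_apply]
  cases x with
  | r k =>
    have hterm : ∀ h : ZMod n,
        (((4 * (n : ℂ))⁻¹ * Zf n (-(h * m))) •
          (Wf n i h 1 1 + Wf n i h 1 (-1) + Wf n i h (-1) 1 + Wf n i h (-1) (-1)))
            (DihedralGroup.r k)
        = (n : ℂ)⁻¹ * Zf n (h * (k - m)) := by
      intro h
      have hz : Zf n (-(h * m)) * Zf n (h * k) = Zf n (h * (k - m)) := by
        rw [← Zf_add]
        congr 1
        ring
      show ((4 * (n : ℂ))⁻¹ * Zf n (-(h * m))) *
        ((Zf n (h * k) + 1 * Zf n (h * i - h * k))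
          + (Zf n (h * k) + 1 * Zf n (h * i - h * k))
          + (Zf n (h * k) + (-1) * Zf n (h * i - h * k))
          + (Zf n (h * k) + (-1) * Zf n (h * i - h * k))) = _
      have h44 : 4 * (4 * (n : ℂ))⁻¹ = (n : ℂ)⁻¹ := by
        field_simp
      linear_combination (4 * (4 * (n : ℂ))⁻¹) * hz + Zf n (h * (k - m)) * h44
    rw [Finset.sum_congr rfl (fun h _ => hterm h), ← Finset.mul_sum,
      sum_Z_orth n (k - m), Pi.single_apply]
    by_cases hkm : k = m
    · rw [if_pos (by rw [hkm]), if_pos (by rw [hkm, sub_self]), inv_mul_cancel₀ hn]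
    · rw [if_neg (by simpa using hkm), if_neg (fun hc => hkm (sub_eq_zero.mp hc)), mul_zero]
  | sr k =>
    have hterm : ∀ h : ZMod n,
        (((4 * (n : ℂ))⁻¹ * Zf n (-(h * m))) •
          (Wf n i h 1 1 + Wf n i h 1 (-1) + Wf n i h (-1) 1 + Wf n i h (-1) (-1)))
            (DihedralGroup.sr k)
        = 0 := by
      intro h
      show ((4 * (n : ℂ))⁻¹ * Zf n (-(h * m))) *
        ((1 : ℂ) * (Zf n (h * k) + 1 * Zf n (h * i - h * k))
          + (-1 : ℂ) * (Zf n (h * k) + 1 * Zf n (h * i - h * k))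
          + (1 : ℂ) * (Zf n (h * k) + (-1) * Zf n (h * i - h * k))
          + (-1 : ℂ) * (Zf n (h * k) + (-1) * Zf n (h * i - h * k))) = 0
      ring
    rw [Finset.sum_congr rfl (fun h _ => hterm h)]
    simp [Pi.single_apply]

/-- The four-eigenvector combination recovering delta functions on reflections. -/
lemma delta_sr (n : ℕ) [NeZero n] (i : ZMod n) (m : ZMod n) :
    (Pi.single (DihedralGroup.sr m) (1 : ℂ) : DihedralGroup n → ℂ)
      = ∑ h : ZMod n, ((4 * (n : ℂ))⁻¹ * Zf n (-(h * m))) •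
          (Wf n i h 1 1 - Wf n i h 1 (-1) + Wf n i h (-1) 1 - Wf n i h (-1) (-1)) := by
  have hn : (n : ℂ) ≠ 0 := Nat.cast_ne_zero.mpr (NeZero.ne n)
  funext x
  rw [Finset.sum_apply]
  cases x with
  | r k =>
    have hterm : ∀ h : ZMod n,
        (((4 * (n : ℂ))⁻¹ * Zf n (-(h * m))) •
          (Wf n i h 1 1 - Wf n i h 1 (-1) + Wf n i h (-1) 1 - Wf n i h (-1) (-1)))
            (DihedralGroup.r k)
        = 0 := by
      intro h
      show ((4 * (n : ℂ))⁻¹ * Zf n (-(h * m))) *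
        ((Zf n (h * k) + 1 * Zf n (h * i - h * k))
          - (Zf n (h * k) + 1 * Zf n (h * i - h * k))
          + (Zf n (h * k) + (-1) * Zf n (h * i - h * k))
          - (Zf n (h * k) + (-1) * Zf n (h * i - h * k))) = 0
      ring
    rw [Finset.sum_congr rfl (fun h _ => hterm h)]
    simp [Pi.single_apply]
  | sr k =>
    have hterm : ∀ h : ZMod n,
        (((4 * (n : ℂ))⁻¹ * Zf n (-(h * m))) •
          (Wf n i h 1 1 - Wf n i h 1 (-1) + Wf n i h (-1) 1 - Wf n i h (-1) (-1)))
            (DihedralGroup.sr k)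
        = (n : ℂ)⁻¹ * Zf n (h * (k - m)) := by
      intro h
      have hz : Zf n (-(h * m)) * Zf n (h * k) = Zf n (h * (k - m)) := by
        rw [← Zf_add]
        congr 1
        ring
      show ((4 * (n : ℂ))⁻¹ * Zf n (-(h * m))) *
        ((1 : ℂ) * (Zf n (h * k) + 1 * Zf n (h * i - h * k))
          - (-1 : ℂ) * (Zf n (h * k) + 1 * Zf n (h * i - h * k))
          + (1 : ℂ) * (Zf n (h * k) + (-1) * Zf n (h * i - h * k))
          - (-1 : ℂ) * (Zf n (h * k) + (-1) * Zf n (h * i - h * k))) = _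
      have h44 : 4 * (4 * (n : ℂ))⁻¹ = (n : ℂ)⁻¹ := by
        field_simp
      linear_combination (4 * (4 * (n : ℂ))⁻¹) * hz + Zf n (h * (k - m)) * h44
    rw [Finset.sum_congr rfl (fun h _ => hterm h), ← Finset.mul_sum,
      sum_Z_orth n (k - m), Pi.single_apply]
    by_cases hkm : k = m
    · rw [if_pos (by rw [hkm]), if_pos (by rw [hkm, sub_self]), inv_mul_cancel₀ hn]
    · rw [if_neg (by simpa using hkm), if_neg (fun hc => hkm (sub_eq_zero.mp hc)), mul_zero]

lemma mulVec_sum_smul {V ι : Type*} [Fintype V] [DecidableEq V] [Fintype ι]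
    (M : Matrix V V ℂ) (c : ι → ℂ) (F : ι → V → ℂ) :
    M.mulVec (∑ t : ι, c t • F t) = ∑ t : ι, c t • M.mulVec (F t) := by
  simp only [← Matrix.mulVecLin_apply, map_sum, map_smul]

/-- Lemma 4.1. If `S₁ ∈ B(⟨a⟩)` and `S₂ = {ba^i}` is a singleton, then
`X(D_n,S)` is integral. -/
theorem stmt7 (n : ℕ) (hn : 3 ≤ n) [NeZero n]
    (S S₁ S₂ : Set (DihedralGroup n)) (hS : S = S₁ ∪ S₂)
    (h1 : (1 : DihedralGroup n) ∉ S) (hSinv : S⁻¹ = S)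
    (hS₁ : S₁ ⊆ rSet n) (i : ZMod n) (hS₂ : S₂ = {DihedralGroup.sr i})
    (hB₁ : InBooleanAlgebra n S₁) :
    IsIntegralGraph (cayleyGraph S) := by
  classical
  have hinv : ∀ x : DihedralGroup n, x⁻¹ ∈ S ↔ x ∈ S := by
    intro x
    conv_rhs => rw [← hSinv]
    rw [Set.mem_inv]
  have hrS : ∀ j : ZMod n, DihedralGroup.r j ∈ S ↔ DihedralGroup.r j ∈ S₁ := by
    intro j
    constructor
    · intro hj
      rw [hS] at hj
      rcases hj with hj | hj
      · exact hj
      · rw [hS₂, Set.mem_singleton_iff] at hj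
        exact absurd hj (by simp)
    · intro hj; rw [hS]; exact Or.inl hj
  have hsrS : ∀ m : ZMod n, DihedralGroup.sr m ∈ S ↔ m = i := by
    intro m
    constructor
    · intro hm
      rw [hS] at hm
      rcases hm with hm | hm
      · obtain ⟨k, hk⟩ := hS₁ hm
        exact absurd hk (by simp)
      · rw [hS₂, Set.mem_singleton_iff] at hm
        simpa using hm
    · intro hm
      rw [hS, hS₂, hm]
      exact Or.inr rfl
  have hsym : ∀ j : ZMod n, DihedralGroup.r (-j) ∈ S₁ ↔ DihedralGroup.r j ∈ S₁ := by
    intro j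
    rw [← hrS, ← hrS j]
    have hrr : DihedralGroup.r (-j) = (DihedralGroup.r j)⁻¹ := rfl
    rw [hrr]
    exact hinv _
  set A := adjMat (cayleyGraph S) with hA
  set p : ℂ[X] := ∏ h : ZMod n,
    ((Polynomial.X - Polynomial.C (Lam n S₁ h + 1)) *
      (Polynomial.X - Polynomial.C (Lam n S₁ h - 1))) with hp
  have hroot : ∀ h : ZMod n, ∀ c : ℂ,
      (c = Lam n S₁ h + 1 ∨ c = Lam n S₁ h - 1) → p.eval c = 0 := by
    intro h c hc
    rw [hp, Polynomial.eval_prod]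
    refine Finset.prod_eq_zero (Finset.mem_univ h) ?_
    rcases hc with hc | hc <;> rw [hc] <;> simp
  have hNW : ∀ (h : ZMod n) (ε δ : ℂ), ε * ε = 1 → δ * δ = 1 → (ε * δ = 1 ∨ ε * δ = -1) →
      (Polynomial.aeval A p).mulVec (Wf n i h ε δ) = 0 := by
    intro h ε δ hε hδ hεδ
    have he := eigen n S S₁ i h1 hSinv hrS hsrS hsym h ε δ hε hδ
    rw [aeval_mulVec A _ _ he p]
    rcases hεδ with hde | hde
    · rw [hde, hroot h _ (Or.inl rfl), zero_smul]
    · rw [hde, hroot h (Lam n S₁ h + -1) (Or.inr (by ring)), zero_smul]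
  have hN0 : (Polynomial.aeval A p : Matrix (DihedralGroup n) (DihedralGroup n) ℂ) = 0 := by
    have hcol : ∀ y : DihedralGroup n,
        (Polynomial.aeval A p).mulVec (Pi.single y (1 : ℂ)) = 0 := by
      intro y
      cases y with
      | r m =>
        rw [delta_r n i m, mulVec_sum_smul]
        refine Finset.sum_eq_zero fun h _ => ?_
        rw [Matrix.mulVec_add, Matrix.mulVec_add, Matrix.mulVec_add,
          hNW h 1 1 (by ring) (by ring) (Or.inl (by ring)),
          hNW h 1 (-1) (by ring) (by ring) (Or.inr (by ring)),
          hNW h (-1) 1 (by ring) (by ring) (Or.inr (by ring)),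
          hNW h (-1) (-1) (by ring) (by ring) (Or.inl (by ring))]
        simp
      | sr m =>
        rw [delta_sr n i m, mulVec_sum_smul]
        refine Finset.sum_eq_zero fun h _ => ?_
        rw [Matrix.mulVec_sub, Matrix.mulVec_add, Matrix.mulVec_sub,
          hNW h 1 1 (by ring) (by ring) (Or.inl (by ring)),
          hNW h 1 (-1) (by ring) (by ring) (Or.inr (by ring)),
          hNW h (-1) 1 (by ring) (by ring) (Or.inr (by ring)),
          hNW h (-1) (-1) (by ring) (by ring) (Or.inl (by ring))]
        simp
    ext x y
    have hxy := congrFun (hcol y) x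
    rw [Matrix.mulVec_single] at hxy
    simpa using hxy
  intro μ hμ
  rw [spectrum.mem_iff, Matrix.isUnit_iff_isUnit_det] at hμ
  have hdet : ((algebraMap ℂ (Matrix (DihedralGroup n) (DihedralGroup n) ℂ)) μ - A).det = 0 := by
    by_contra hne
    exact hμ (isUnit_iff_ne_zero.mpr hne)
  obtain ⟨v, hv0, hv⟩ := Matrix.exists_mulVec_eq_zero_iff.mpr hdet
  have hev : A.mulVec v = μ • v := by
    rw [Matrix.sub_mulVec, Algebra.algebraMap_eq_smul_one, Matrix.smul_mulVec,
      Matrix.one_mulVec, sub_eq_zero] at hv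
    exact hv.symm
  have hfin := aeval_mulVec A v μ hev p
  rw [hN0] at hfin
  have h0 : p.eval μ • v = 0 := by
    rw [← hfin, Matrix.zero_mulVec]
  have hpμ : p.eval μ = 0 := by
    rcases smul_eq_zero.mp h0 with h | h
    · exact h
    · exact absurd h hv0
  rw [hp, Polynomial.eval_prod] at hpμ
  obtain ⟨h, -, hfac⟩ := Finset.prod_eq_zero_iff.mp hpμ
  rw [Polynomial.eval_mul, Polynomial.eval_sub, Polynomial.eval_sub, Polynomial.eval_X,
    Polynomial.eval_C, Polynomial.eval_C] at hfac
  obtain ⟨z, hz⟩ := lam_int n S₁ hB₁ h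
  rcases mul_eq_zero.mp hfac with hf | hf
  · rw [sub_eq_zero] at hf
    exact ⟨z + 1, by rw [hf, hz]; push_cast; ring⟩
  · rw [sub_eq_zero] at hf
    exact ⟨z - 1, by rw [hf, hz]; push_cast; ring⟩
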